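/- Let P be a finite point set in the plane. The rectangle of influence graph of P is a subgraph of every xy-monotone spanning geometric graph of P; consequently it is simultaneously the unique xy-monotone spanning graph of P of minimum cost (sum of Euclidean edge lengths) and the unique xy-monotone spanning graph of P with the fewest edges. -/

import Mathlib

open scoped BigOperators

noncomputable section

/-- A point in the Euclidean plane. -/
abbrev Pt : Type := EuclideanSpace ℝ (Fin 2)

noncomputable instance : DecidableEq Pt := Classical.decEq _

/-- A real sequence is monotone (increasing or decreasing) on indices `0..t`. -/
def MonoTo (f : ℕ → ℝ) (t : ℕ) : Prop :=
  (∀ i j : ℕ, i ≤ j → j ≤ t → f i ≤ f j) ∨ (∀ i j : ℕ, i ≤ j → j ≤ t → f j ≤ f i)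

/-- A point sequence is `y`-monotone on indices `0..t`. -/
def YMono (q : ℕ → Pt) (t : ℕ) : Prop := MonoTo (fun i => q i 1) t

/-- A point sequence is `xy`-monotone on indices `0..t`. -/
def XYMono (q : ℕ → Pt) (t : ℕ) : Prop :=
  MonoTo (fun i => q i 0) t ∧ MonoTo (fun i => q i 1) t

/-- `E` is the edge set of a geometric graph with vertex set `P` (no loops). -/
def IsGraphOn (P : Finset Pt) (E : Finset (Sym2 Pt)) : Prop :=
  ∀ p q : Pt, s(p, q) ∈ E → p ∈ P ∧ q ∈ P ∧ p ≠ q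

/-- `w 0, …, w t` is a path of `E` from `a` to `b`. -/
def IsPathBetween (E : Finset (Sym2 Pt)) (w : ℕ → Pt) (t : ℕ) (a b : Pt) : Prop :=
  w 0 = a ∧ w t = b ∧ ∀ i : ℕ, i < t → s(w i, w (i + 1)) ∈ E

/-- `a` and `b` are connected by a `y`-monotone path of `E`. -/
def ConnYMono (E : Finset (Sym2 Pt)) (a b : Pt) : Prop :=
  ∃ w t, IsPathBetween E w t a b ∧ YMono w t

/-- `a` and `b` are connected by an `xy`-monotone path of `E`. -/
def ConnXYMono (E : Finset (Sym2 Pt)) (a b : Pt) : Prop :=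
  ∃ w t, IsPathBetween E w t a b ∧ XYMono w t

/-- Cost of a geometric graph: sum of Euclidean lengths of edges. -/
def cost (E : Finset (Sym2 Pt)) : ℝ :=
  ∑ e ∈ E, Sym2.lift ⟨fun p q => dist p q, fun p q => dist_comm p q⟩ e

/-- Closed axis-aligned rectangle with corners `p` and `q`. -/
def Rect (p q : Pt) : Set Pt :=
  {z | min (p 0) (q 0) ≤ z 0 ∧ z 0 ≤ max (p 0) (q 0) ∧
       min (p 1) (q 1) ≤ z 1 ∧ z 1 ≤ max (p 1) (q 1)}

/-- `p` and `q` are rectangularly visible in `P`. -/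
def RectVisible (P : Finset Pt) (p q : Pt) : Prop :=
  ∀ r ∈ P, r ∈ Rect p q → r = p ∨ r = q

/-- Adjacency in the rectangle of influence graph of `P`. -/
def RIGAdj (P : Finset Pt) (a b : Pt) : Prop :=
  a ∈ P ∧ b ∈ P ∧ a ≠ b ∧ RectVisible P a b

/-- A spanning graph on vertex set `V` in which every root in `R` is connected
to every vertex by a `y`-monotone path. -/
def RootedSpan (V R : Finset Pt) (E : Finset (Sym2 Pt)) : Prop :=
  IsGraphOn V E ∧ ∀ r ∈ R, ∀ p ∈ V, ConnYMono E r p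

/-- `E` is a minimum-cost rooted `y`-monotone spanning graph of `V` with roots `R`. -/
def IsMinRooted (V R : Finset Pt) (E : Finset (Sym2 Pt)) : Prop :=
  RootedSpan V R E ∧ ∀ E', RootedSpan V R E' → cost E ≤ cost E'

/-- First rotated coordinate (rotation of axes by angle `θ`). -/
def rotX (θ : ℝ) (z : Pt) : ℝ := Real.cos θ * z 0 + Real.sin θ * z 1

/-- Second rotated coordinate (rotation of axes by angle `θ`). -/
def rotY (θ : ℝ) (z : Pt) : ℝ := -Real.sin θ * z 0 + Real.cos θ * z 1

/-- Closed rectangle with corners `p`, `q` w.r.t. the axes rotated by `θ`. -/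
def RectRot (θ : ℝ) (p q : Pt) : Set Pt :=
  {z | min (rotX θ p) (rotX θ q) ≤ rotX θ z ∧ rotX θ z ≤ max (rotX θ p) (rotX θ q) ∧
       min (rotY θ p) (rotY θ q) ≤ rotY θ z ∧ rotY θ z ≤ max (rotY θ p) (rotY θ q)}

/-- Points of `P` rectangularly visible from `p` w.r.t. the axes rotated by `θ`. -/
def RVrot (θ : ℝ) (P : Finset Pt) (p : Pt) : Set Pt :=
  {q | q ∈ P ∧ q ≠ p ∧ ∀ r ∈ P, r ∈ RectRot θ p q → r = p ∨ r = q}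

/-- Adjacency in the rectangle of influence graph of `P` w.r.t. the axes rotated by `θ`. -/
def RIGrotAdj (θ : ℝ) (P : Finset Pt) (a b : Pt) : Prop :=
  a ∈ P ∧ b ∈ P ∧ a ≠ b ∧ ∀ r ∈ P, r ∈ RectRot θ a b → r = a ∨ r = b

/-! ### Auxiliary lemmas -/

/-- Directed monotonicity: `f` is monotone in the direction from `c` to `d`. -/
def Dir (c d : ℝ) (f : ℕ → ℝ) (t : ℕ) : Prop :=
  (c ≤ d → ∀ i j : ℕ, i ≤ j → j ≤ t → f i ≤ f j) ∧
  (d ≤ c → ∀ i j : ℕ, i ≤ j → j ≤ t → f j ≤ f i)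

lemma Dir.monoTo {c d : ℝ} {f : ℕ → ℝ} {t : ℕ} (h : Dir c d f t) : MonoTo f t := by
  rcases le_total c d with hc | hc
  · exact Or.inl (h.1 hc)
  · exact Or.inr (h.2 hc)

lemma mono_between {f : ℕ → ℝ} {t : ℕ} (h : MonoTo f t) :
    ∀ i ≤ t, min (f 0) (f t) ≤ f i ∧ f i ≤ max (f 0) (f t) := by
  intro i hi
  rcases h with h | h
  · exact ⟨le_trans (min_le_left _ _) (h 0 i (Nat.zero_le _) hi),
      le_trans (h i t hi le_rfl) (le_max_right _ _)⟩
  · exact ⟨le_trans (min_le_right _ _) (h i t hi le_rfl),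
      le_trans (h 0 i (Nat.zero_le _) hi) (le_max_left _ _)⟩

lemma coord_eq' {x y z : ℝ} (h1 : min x y ≤ z) (h2 : z ≤ max x y)
    (h3 : min x z ≤ y) (h4 : y ≤ max x z) : y = z := by
  rcases le_total x y with h|h <;> rcases le_total x z with h'|h' <;>
    simp [min_def, max_def, h, h'] at * <;> linarith

lemma pt_eq {b r : Pt} (h0 : b 0 = r 0) (h1 : b 1 = r 1) : b = r := by
  ext i; fin_cases i <;> assumption

lemma mem_rect_self_left (a b : Pt) : a ∈ Rect a b :=
  ⟨min_le_left _ _, le_max_left _ _, min_le_left _ _, le_max_left _ _⟩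

lemma mem_rect_self_right (a b : Pt) : b ∈ Rect a b :=
  ⟨min_le_right _ _, le_max_right _ _, min_le_right _ _, le_max_right _ _⟩

lemma rect_comm (p q : Pt) : Rect p q = Rect q p := by
  simp [Rect, min_comm, max_comm]

lemma rect_subset {a b r : Pt} (hr : r ∈ Rect a b) : Rect a r ⊆ Rect a b := by
  obtain ⟨h1, h2, h3, h4⟩ := hr
  rintro z ⟨g1, g2, g3, g4⟩
  exact ⟨le_trans (le_min (min_le_left _ _) h1) g1,
    le_trans g2 (max_le (le_max_left _ _) h2),
    le_trans (le_min (min_le_left _ _) h3) g3,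
    le_trans g4 (max_le (le_max_left _ _) h4)⟩

lemma rect_corner_eq {a b r : Pt} (hr : r ∈ Rect a b) (hb : b ∈ Rect a r) : b = r := by
  obtain ⟨h1, h2, h3, h4⟩ := hr
  obtain ⟨g1, g2, g3, g4⟩ := hb
  exact pt_eq (coord_eq' h1 h2 g1 g2) (coord_eq' h3 h4 g3 g4)

/-- The points of `P` in the rectangle of `a` and `b`. -/
noncomputable def RS (P : Finset Pt) (a b : Pt) : Finset Pt :=
  @Finset.filter _ (· ∈ Rect a b) (Classical.decPred _) P

lemma mem_RS {P : Finset Pt} {a b z : Pt} : z ∈ RS P a b ↔ z ∈ P ∧ z ∈ Rect a b := by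
  simp [RS]

lemma comb_mono {f g : ℕ → ℝ} {t1 t2 : ℕ} (hfg : f t1 = g 0)
    (hf : ∀ i j : ℕ, i ≤ j → j ≤ t1 → f i ≤ f j)
    (hg : ∀ i j : ℕ, i ≤ j → j ≤ t2 → g i ≤ g j) :
    ∀ i j : ℕ, i ≤ j → j ≤ t1 + t2 →
      (if i ≤ t1 then f i else g (i - t1)) ≤ (if j ≤ t1 then f j else g (j - t1)) := by
  intro i j hij hj
  by_cases hjt : j ≤ t1
  · simp only [hij.trans hjt, hjt, if_true]
    exact hf i j hij hjt
  · by_cases hit : i ≤ t1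
    · simp only [hit, hjt, if_true, if_false]
      calc f i ≤ f t1 := hf i t1 hit le_rfl
        _ = g 0 := hfg
        _ ≤ g (j - t1) := hg 0 (j - t1) (Nat.zero_le _) (by omega)
    · simp only [hit, hjt, if_false]
      exact hg _ _ (by omega) (by omega)

lemma comb_anti {f g : ℕ → ℝ} {t1 t2 : ℕ} (hfg : f t1 = g 0)
    (hf : ∀ i j : ℕ, i ≤ j → j ≤ t1 → f j ≤ f i)
    (hg : ∀ i j : ℕ, i ≤ j → j ≤ t2 → g j ≤ g i) :
    ∀ i j : ℕ, i ≤ j → j ≤ t1 + t2 →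
      (if j ≤ t1 then f j else g (j - t1)) ≤ (if i ≤ t1 then f i else g (i - t1)) := by
  intro i j hij hj
  by_cases hjt : j ≤ t1
  · simp only [hij.trans hjt, hjt, if_true]
    exact hf i j hij hjt
  · by_cases hit : i ≤ t1
    · simp only [hit, hjt, if_true, if_false]
      calc g (j - t1) ≤ g 0 := hg 0 (j - t1) (Nat.zero_le _) (by omega)
        _ = f t1 := hfg.symm
        _ ≤ f i := hf i t1 hit le_rfl
    · simp only [hit, hjt, if_false]
      exact hg _ _ (by omega) (by omega)

lemma Dir.comb {c d e : ℝ} {f g : ℕ → ℝ} {t1 t2 : ℕ}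
    (hmid1 : min c e ≤ d) (hmid2 : d ≤ max c e) (hfg : f t1 = g 0)
    (hf : Dir c d f t1) (hg : Dir d e g t2) :
    Dir c e (fun i => if i ≤ t1 then f i else g (i - t1)) (t1 + t2) := by
  constructor
  · intro hce
    have hcd : c ≤ d := by rw [min_eq_left hce] at hmid1; exact hmid1
    have hde : d ≤ e := by rw [max_eq_right hce] at hmid2; exact hmid2
    exact comb_mono hfg (hf.1 hcd) (hg.1 hde)
  · intro hec
    have hdc : d ≤ c := by rw [max_eq_left hec] at hmid2; exact hmid2
    have hed : e ≤ d := by rw [min_eq_right hec] at hmid1; exact hmid1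
    exact comb_anti hfg (hf.2 hdc) (hg.2 hed)

lemma dir_zero (c d : ℝ) (f : ℕ → ℝ) : Dir c d f 0 := by
  constructor <;> intro _ i j hij hj <;>
    · have hi0 : i = 0 := by omega
      have hj0 : j = 0 := by omega
      simp [hi0, hj0]

lemma dir_pair (c d : ℝ) : Dir c d (fun i => if i = 0 then c else d) 1 := by
  constructor <;> intro h i j hij hj <;>
    by_cases hi : i = 0 <;> by_cases hj' : j = 0 <;>
      simp only [hi, hj', if_true, if_false, if_pos, if_neg, not_false_iff] <;>
        first | rfl | exact h | omega

/-- Key lemma: `xy`-monotone connectivity in the RIG, by strong induction on the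
number of points in the rectangle. -/
lemma rig_conn (P : Finset Pt) (ER : Finset (Sym2 Pt))
    (hER : ∀ a b : Pt, s(a, b) ∈ ER ↔ RIGAdj P a b) :
    ∀ n : ℕ, ∀ a b : Pt, a ∈ P → b ∈ P → (RS P a b).card ≤ n →
      ∃ (w : ℕ → Pt) (t : ℕ), w 0 = a ∧ w t = b ∧ (∀ i : ℕ, i < t → s(w i, w (i + 1)) ∈ ER) ∧
        Dir (a 0) (b 0) (fun i => w i 0) t ∧ Dir (a 1) (b 1) (fun i => w i 1) t := by
  intro n
  induction n with
  | zero =>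
    intro a b ha hb hcard
    exfalso
    have hmem : a ∈ RS P a b := mem_RS.mpr ⟨ha, mem_rect_self_left a b⟩
    have := Finset.card_pos.mpr ⟨a, hmem⟩
    omega
  | succ n ih =>
    intro a b ha hb hcard
    by_cases hab : a = b
    · subst hab
      exact ⟨fun _ => a, 0, rfl, rfl, by omega, dir_zero _ _ _, dir_zero _ _ _⟩
    by_cases hvis : RectVisible P a b
    · -- direct edge
      have hedge : s(a, b) ∈ ER := (hER a b).mpr ⟨ha, hb, hab, hvis⟩
      refine ⟨fun i => if i = 0 then a else b, 1, by simp, by simp, ?_, ?_, ?_⟩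
      · intro i hi
        have hi0 : i = 0 := by omega
        simpa [hi0] using hedge
      · have hfun : (fun i => (if i = 0 then a else b) 0) =
            (fun i => if i = 0 then a 0 else b 0) := by
          funext i; exact apply_ite (fun z : Pt => z 0) _ _ _
        show Dir (a 0) (b 0) (fun i => (if i = 0 then a else b) 0) 1
        rw [hfun]; exact dir_pair _ _
      · have hfun : (fun i => (if i = 0 then a else b) 1) =
            (fun i => if i = 0 then a 1 else b 1) := by
          funext i; exact apply_ite (fun z : Pt => z 1) _ _ _
        show Dir (a 1) (b 1) (fun i => (if i = 0 then a else b) 1) 1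
        rw [hfun]; exact dir_pair _ _
    · -- there is a point strictly inside the rectangle
      rw [RectVisible] at hvis; push_neg at hvis
      obtain ⟨r, hrP, hrRect, hra, hrb⟩ := hvis
      have hrRect' : r ∈ Rect b a := by rw [rect_comm]; exact hrRect
      have hsub1 : RS P a r ⊆ RS P a b := by
        intro z hz
        rw [mem_RS] at hz ⊢
        exact ⟨hz.1, rect_subset hrRect hz.2⟩
      have hbnot : b ∉ RS P a r := by
        intro hb'
        exact hrb (rect_corner_eq hrRect (mem_RS.mp hb').2).symm
      have hlt1 : (RS P a r).card < (RS P a b).card :=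
        Finset.card_lt_card ((Finset.ssubset_iff_of_subset hsub1).mpr
          ⟨b, mem_RS.mpr ⟨hb, mem_rect_self_right a b⟩, hbnot⟩)
      have hsub2 : RS P r b ⊆ RS P a b := by
        intro z hz
        rw [mem_RS] at hz ⊢
        refine ⟨hz.1, ?_⟩
        rw [rect_comm]
        exact rect_subset hrRect' (by rw [rect_comm]; exact hz.2)
      have hanot : a ∉ RS P r b := by
        intro ha'
        have haR : a ∈ Rect b r := by rw [rect_comm]; exact (mem_RS.mp ha').2
        exact hra (rect_corner_eq hrRect' haR).symm
      have hlt2 : (RS P r b).card < (RS P a b).card :=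
        Finset.card_lt_card ((Finset.ssubset_iff_of_subset hsub2).mpr
          ⟨a, mem_RS.mpr ⟨ha, mem_rect_self_left a b⟩, hanot⟩)
      obtain ⟨w1, t1, h10, h1t, h1e, h1x, h1y⟩ := ih a r ha hrP (by omega)
      obtain ⟨w2, t2, h20, h2t, h2e, h2x, h2y⟩ := ih r b hrP hb (by omega)
      refine ⟨fun i => if i ≤ t1 then w1 i else w2 (i - t1), t1 + t2,
        by simp [h10], ?_, ?_, ?_, ?_⟩
      · by_cases ht : t1 + t2 ≤ t1
        · have ht2 : t2 = 0 := by omega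
          subst ht2
          show (if t1 + 0 ≤ t1 then w1 (t1 + 0) else w2 (t1 + 0 - t1)) = b
          rw [if_pos (by omega), Nat.add_zero, h1t, ← h20, h2t]
        · show (if t1 + t2 ≤ t1 then w1 (t1 + t2) else w2 (t1 + t2 - t1)) = b
          rw [if_neg ht, show t1 + t2 - t1 = t2 by omega, h2t]
      · intro i hi
        by_cases h1 : i + 1 ≤ t1
        · have hi1 : i ≤ t1 := by omega
          show s((if i ≤ t1 then w1 i else w2 (i - t1)),
               (if i + 1 ≤ t1 then w1 (i + 1) else w2 (i + 1 - t1))) ∈ ER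
          rw [if_pos hi1, if_pos h1]
          exact h1e i (by omega)
        · have hwi : (if i ≤ t1 then w1 i else w2 (i - t1)) = w2 (i - t1) := by
            by_cases hit : i ≤ t1
            · have hieq : i = t1 := by omega
              subst hieq
              rw [if_pos hit, h1t, Nat.sub_self, h20]
            · rw [if_neg hit]
          show s((if i ≤ t1 then w1 i else w2 (i - t1)),
               (if i + 1 ≤ t1 then w1 (i + 1) else w2 (i + 1 - t1))) ∈ ER
          rw [hwi, if_neg h1, show i + 1 - t1 = (i - t1) + 1 by omega]
          exact h2e (i - t1) (by omega)
      · have hseam : w1 t1 0 = w2 0 0 := by rw [h1t, h20]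
        have hc := Dir.comb hrRect.1 hrRect.2.1 hseam h1x h2x
        have hfun : (fun i => (if i ≤ t1 then w1 i else w2 (i - t1)) 0) =
            (fun i => if i ≤ t1 then w1 i 0 else w2 (i - t1) 0) := by
          funext i; exact apply_ite (fun z : Pt => z 0) _ _ _
        show Dir (a 0) (b 0) (fun i => (if i ≤ t1 then w1 i else w2 (i - t1)) 0) (t1 + t2)
        rw [hfun]; exact hc
      · have hseam : w1 t1 1 = w2 0 1 := by rw [h1t, h20]
        have hc := Dir.comb hrRect.2.2.1 hrRect.2.2.2 hseam h1y h2y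
        have hfun : (fun i => (if i ≤ t1 then w1 i else w2 (i - t1)) 1) =
            (fun i => if i ≤ t1 then w1 i 1 else w2 (i - t1) 1) := by
          funext i; exact apply_ite (fun z : Pt => z 1) _ _ _
        show Dir (a 1) (b 1) (fun i => (if i ≤ t1 then w1 i else w2 (i - t1)) 1) (t1 + t2)
        rw [hfun]; exact hc

/-- The RIG is a subgraph of every `xy`-monotone spanning graph. -/
lemma rig_sub (P : Finset Pt) (ER : Finset (Sym2 Pt))
    (hER : ∀ a b : Pt, s(a, b) ∈ ER ↔ RIGAdj P a b)
    (E : Finset (Sym2 Pt)) (hE : IsGraphOn P E)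
    (hconn : ∀ a ∈ P, ∀ b ∈ P, ConnXYMono E a b) : ER ⊆ E := by
  intro e
  induction e using Sym2.ind with
  | _ a b =>
    intro he
    obtain ⟨ha, hb, hab, hvis⟩ := (hER a b).mp he
    obtain ⟨w, t, ⟨h0, ht, hedge⟩, hx, hy⟩ := hconn a ha b hb
    have ht0 : t ≠ 0 := by
      intro h; subst h; exact hab (h0.symm.trans ht)
    have hedge0 : s(w 0, w 1) ∈ E := hedge 0 (by omega)
    obtain ⟨hw0P, hw1P, hne⟩ := hE _ _ hedge0
    have hw1rect : w 1 ∈ Rect a b := by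
      obtain ⟨l1, u1⟩ := mono_between hx 1 (by omega)
      obtain ⟨l2, u2⟩ := mono_between hy 1 (by omega)
      simp only [h0, ht] at l1 u1 l2 u2
      exact ⟨l1, u1, l2, u2⟩
    rcases hvis (w 1) hw1P hw1rect with h1 | h1
    · exact absurd (h0.trans h1.symm) hne
    · rw [← h0, ← h1]; exact hedge0

/-- the rectangle of influence graph of `P` is a subgraph of every
`xy`-monotone spanning graph of `P`; it is itself `xy`-monotone, and it is the unique
minimum-cost and the unique minimum-edge `xy`-monotone spanning graph of `P`. -/
theorem rig_is_unique_min_xyMonotone_spanning_graph (P : Finset Pt)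
    (ER : Finset (Sym2 Pt)) (hER : ∀ a b : Pt, s(a, b) ∈ ER ↔ RIGAdj P a b) :
    (∀ E : Finset (Sym2 Pt), IsGraphOn P E →
        (∀ a ∈ P, ∀ b ∈ P, ConnXYMono E a b) → ER ⊆ E) ∧
    IsGraphOn P ER ∧ (∀ a ∈ P, ∀ b ∈ P, ConnXYMono ER a b) ∧
    (∀ E : Finset (Sym2 Pt), IsGraphOn P E →
        (∀ a ∈ P, ∀ b ∈ P, ConnXYMono E a b) →
        cost ER ≤ cost E ∧ (cost E ≤ cost ER → E = ER) ∧
        ER.card ≤ E.card ∧ (E.card ≤ ER.card → E = ER)) := by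
  have hsub := rig_sub P ER hER
  have hgraph : IsGraphOn P ER := by
    intro p q h
    obtain ⟨hp, hq, hne, _⟩ := (hER p q).mp h
    exact ⟨hp, hq, hne⟩
  have hconn : ∀ a ∈ P, ∀ b ∈ P, ConnXYMono ER a b := by
    intro a ha b hb
    obtain ⟨w, t, h0, ht, he, hx, hy⟩ :=
      rig_conn P ER hER (RS P a b).card a b ha hb le_rfl
    exact ⟨w, t, ⟨h0, ht, he⟩, hx.monoTo, hy.monoTo⟩
  refine ⟨hsub, hgraph, hconn, ?_⟩
  intro E hE hc
  have hs : ER ⊆ E := hsub E hE hc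
  have hpos : ∀ e ∈ E,
      0 < Sym2.lift ⟨fun p q => dist p q, fun p q => dist_comm p q⟩ e := by
    intro e
    induction e using Sym2.ind with
    | _ p q =>
      intro he
      obtain ⟨_, _, hne⟩ := hE p q he
      simpa using dist_pos.mpr hne
  have hcostle : cost ER ≤ cost E :=
    Finset.sum_le_sum_of_subset_of_nonneg hs (fun e he _ => le_of_lt (hpos e he))
  refine ⟨hcostle, ?_, Finset.card_le_card hs,
    fun h => (Finset.eq_of_subset_of_card_le hs h).symm⟩
  intro hle
  by_contra hne
  have hss : ER ⊂ E := Finset.ssubset_iff_subset_ne.mpr ⟨hs, fun h => hne h.symm⟩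
  obtain ⟨x, hxE, hxER⟩ := Finset.exists_of_ssubset hss
  have hsplit :
      ∑ e ∈ E \ ER, Sym2.lift ⟨fun p q => dist p q, fun p q => dist_comm p q⟩ e +
      ∑ e ∈ ER, Sym2.lift ⟨fun p q => dist p q, fun p q => dist_comm p q⟩ e =
      ∑ e ∈ E, Sym2.lift ⟨fun p q => dist p q, fun p q => dist_comm p q⟩ e :=
    Finset.sum_sdiff hs
  have hposdiff :
      0 < ∑ e ∈ E \ ER, Sym2.lift ⟨fun p q => dist p q, fun p q => dist_comm p q⟩ e :=
    Finset.sum_pos (fun e he => hpos e (Finset.mem_sdiff.mp he).1)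
      ⟨x, Finset.mem_sdiff.mpr ⟨hxE, hxER⟩⟩
  simp only [cost] at hle
  linarith

end
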